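/- Let N be a Petri net with basis partition (T_E, T_I) where the T_I-induced subnet is acyclic. Any firing sequence σ = σ_1 t_1 σ_2 t_2 ⋯ σ_n t_n σ_{n+1} from a basis marking M_b (with σ_j ∈ T_I*, t_j ∈ T_E) reaching marking M can be rearranged into a sequence σ_min,1 t_1 σ_min,2 t_2 ⋯ σ_min,n t_n σ' firable from M_b and reaching the same M, where each σ_min,j is a minimal explanation of t_j at the basis marking reached after σ_min,1 t_1 ⋯ σ_min,j−1 t_j−1, and σ' ∈ T_I*. Hence every reachable marking of N lies in the implicit reach of some basis marking reachable in the BRG. -/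

import Mathlib

/-- A Petri net with `m` places and `n` transitions. -/
structure PetriNet (m n : ℕ) where
  Pre : Fin m → Fin n → ℕ
  Post : Fin m → Fin n → ℕ

namespace PetriNet

variable {m n : ℕ}

/-- Incidence matrix `C = Post - Pre`. -/
def C (N : PetriNet m n) (p : Fin m) (t : Fin n) : ℤ :=
  (N.Post p t : ℤ) - (N.Pre p t : ℤ)

/-- Transition `t` is enabled at marking `M`. -/
def enabled (N : PetriNet m n) (M : Fin m → ℕ) (t : Fin n) : Prop :=
  ∀ p, N.Pre p t ≤ M p

/-- Firing transition `t` at marking `M`. -/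
def fire (N : PetriNet m n) (M : Fin m → ℕ) (t : Fin n) : Fin m → ℕ :=
  fun p => M p + N.Post p t - N.Pre p t

/-- `fires N M σ M'` : the sequence `σ` is firable at `M` and yields `M'`. -/
inductive fires (N : PetriNet m n) : (Fin m → ℕ) → List (Fin n) → (Fin m → ℕ) → Prop
  | nil (M : Fin m → ℕ) : fires N M [] M
  | cons {M M' : Fin m → ℕ} {t : Fin n} {σ : List (Fin n)} :
      N.enabled M t → fires N (N.fire M t) σ M' → fires N M (t :: σ) M'

/-- Firing vector of a sequence. -/
def fvec (σ : List (Fin n)) : Fin n → ℕ := fun t => σ.count t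

/-- Arcs of the subnet induced by transition set `TI` (full net for `TI = Set.univ`). -/
def arc (N : PetriNet m n) (TI : Set (Fin n)) :
    (Fin m ⊕ Fin n) → (Fin m ⊕ Fin n) → Prop
  | Sum.inl p, Sum.inr t => t ∈ TI ∧ 0 < N.Pre p t
  | Sum.inr t, Sum.inl p => t ∈ TI ∧ 0 < N.Post p t
  | _, _ => False

/-- The subnet induced by `TI` is acyclic: no directed cycle. -/
def SubnetAcyclic (N : PetriNet m n) (TI : Set (Fin n)) : Prop :=
  ∀ x, ¬ Relation.TransGen (N.arc TI) x x

/-- Transitions in structural conflict. -/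
def Tconf (N : PetriNet m n) : Set (Fin n) :=
  {t | ∃ p, 0 < N.Pre p t ∧ ∃ t', t' ≠ t ∧ 0 < N.Pre p t'}

/-- `TI` is non-conflicting: `TI ⊆ T \ T_conf`. -/
def NonConflicting (N : PetriNet m n) (TI : Set (Fin n)) : Prop :=
  ∀ t ∈ TI, t ∉ N.Tconf

/-- `TI` is non-increasing w.r.t. the GMEC weight vector `w`. -/
def NonIncreasing (N : PetriNet m n) (w : Fin m → ℤ) (TI : Set (Fin n)) : Prop :=
  ∀ t ∈ TI, ∑ p, w p * N.C p t ≤ 0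

/-- The `TI`-induced subnet is conflict-free: every place has at most one
output transition among `TI`. -/
def ConflictFreeSubnet (N : PetriNet m n) (TI : Set (Fin n)) : Prop :=
  ∀ p : Fin m, ∀ t ∈ TI, ∀ t' ∈ TI, 0 < N.Pre p t → 0 < N.Pre p t' → t = t'

/-- `σ` consists only of transitions in `TI`. -/
def ImplicitSeq (TI : Set (Fin n)) (σ : List (Fin n)) : Prop := ∀ t ∈ σ, t ∈ TI

/-- Implicit reach of a marking `Mb`. -/
def RI (N : PetriNet m n) (TI : Set (Fin n)) (Mb : Fin m → ℕ) : Set (Fin m → ℕ) :=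
  {M | ∃ σ, ImplicitSeq TI σ ∧ N.fires Mb σ M}

/-- Reachability set. -/
def Reach (N : PetriNet m n) (M0 : Fin m → ℕ) : Set (Fin m → ℕ) :=
  {M | ∃ σ, N.fires M0 σ M}

/-- State equation `M' = M + C·y` (the nonnegativity `M' ≥ 0` is implicit in
`M' : Fin m → ℕ`). -/
def stateEq (N : PetriNet m n) (M : Fin m → ℕ) (y : Fin n → ℕ) (M' : Fin m → ℕ) : Prop :=
  ∀ p, (M' p : ℤ) = (M p : ℤ) + ∑ t, N.C p t * (y t : ℤ)

/-- `σ` is an explanation of `t` at `M`: an implicit sequence after which `t`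
is enabled. -/
def IsExplanation (N : PetriNet m n) (TI : Set (Fin n)) (M : Fin m → ℕ)
    (t : Fin n) (σ : List (Fin n)) : Prop :=
  ImplicitSeq TI σ ∧ ∃ M', N.fires M σ M' ∧ N.enabled M' t

/-- `y` is a minimal explanation vector of `t` at `M`. -/
def MinExplVec (N : PetriNet m n) (TI : Set (Fin n)) (M : Fin m → ℕ)
    (t : Fin n) (y : Fin n → ℕ) : Prop :=
  (∃ σ, N.IsExplanation TI M t σ ∧ fvec σ = y) ∧
    ∀ σ', N.IsExplanation TI M t σ' → ¬ fvec σ' < y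

/-- `y` is the firing vector of some implicit sequence firable at `M`. -/
def FirableVec (N : PetriNet m n) (TI : Set (Fin n)) (M : Fin m → ℕ)
    (y : Fin n → ℕ) : Prop :=
  ∃ σ M', ImplicitSeq TI σ ∧ fvec σ = y ∧ N.fires M σ M'

/-- `y` is a maximal implicit firing vector at `M`. -/
def MaximalIFV (N : PetriNet m n) (TI : Set (Fin n)) (M : Fin m → ℕ)
    (y : Fin n → ℕ) : Prop :=
  N.FirableVec TI M y ∧ ∀ y', N.FirableVec TI M y' → ¬ y < y'

/-- `y` is the maximal implicit firing vector at `M`, dominating all others. -/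
def GreatestIFV (N : PetriNet m n) (TI : Set (Fin n)) (M : Fin m → ℕ)
    (y : Fin n → ℕ) : Prop :=
  N.FirableVec TI M y ∧ ∀ y', N.FirableVec TI M y' → y' ≤ y

/-- One step of the BRG: fire a minimal explanation followed by an explicit
transition `t ∉ TI`. -/
def BRGstep (N : PetriNet m n) (TI : Set (Fin n)) (M1 M2 : Fin m → ℕ) : Prop :=
  ∃ t ∉ TI, ∃ y, N.MinExplVec TI M1 t y ∧
    ∀ p, (M2 p : ℤ) = (M1 p : ℤ) + (∑ s, N.C p s * (y s : ℤ)) + N.C p t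

/-- `Mb` is a basis marking of the BRG with initial marking `M0`. -/
def Basis (N : PetriNet m n) (TI : Set (Fin n)) (M0 Mb : Fin m → ℕ) : Prop :=
  Relation.ReflTransGen (N.BRGstep TI) M0 Mb

/-- A marking is dead if it enables no transition. -/
def Dead (N : PetriNet m n) (M : Fin m → ℕ) : Prop := ∀ t, ¬ N.enabled M t

/-- Final markings of the GMEC `(w, k)`. -/
def Final (w : Fin m → ℤ) (k : ℤ) (M : Fin m → ℕ) : Prop :=
  ∑ p, w p * (M p : ℤ) ≤ k

/-- The plant is non-blocking. -/
def NonBlocking (N : PetriNet m n) (M0 : Fin m → ℕ) (w : Fin m → ℤ) (k : ℤ) : Prop :=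
  ∀ M ∈ N.Reach M0, ∃ M' ∈ N.Reach M, Final w k M'

/-- Boundedness of the marked net. -/
def Bounded (N : PetriNet m n) (M0 : Fin m → ℕ) : Prop :=
  ∃ K, ∀ M ∈ N.Reach M0, ∀ p, M p ≤ K

end PetriNet

open PetriNet

/-- A path in the BRG labelled by the list of explicit transitions fired:
each step fires a minimal explanation followed by an explicit transition. -/
inductive BRGpath (N : PetriNet m n) (TI : Set (Fin n)) :
    (Fin m → ℕ) → List (Fin n) → (Fin m → ℕ) → Prop
  | nil (M : Fin m → ℕ) : BRGpath N TI M [] M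
  | cons {M1 M2 M3 : Fin m → ℕ} {t : Fin n} {τ : List (Fin n)} :
      t ∉ TI →
      (∃ y, N.MinExplVec TI M1 t y ∧
        ∀ p, (M2 p : ℤ) = (M1 p : ℤ) + (∑ s, N.C p s * (y s : ℤ)) + N.C p t) →
      BRGpath N TI M2 τ M3 → BRGpath N TI M1 (t :: τ) M3

section Aux

variable {m n : ℕ}

lemma fires_append {N : PetriNet m n} {M M'' : Fin m → ℕ} {σ₁ σ₂ : List (Fin n)} :
    N.fires M (σ₁ ++ σ₂) M'' ↔ ∃ M', N.fires M σ₁ M' ∧ N.fires M' σ₂ M'' := by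
  induction σ₁ generalizing M with
  | nil =>
    constructor
    · intro h; exact ⟨M, PetriNet.fires.nil M, h⟩
    · rintro ⟨M', h1, h2⟩; cases h1; exact h2
  | cons t σ₁ ih =>
    constructor
    · intro h
      cases h with
      | cons he hrest =>
        obtain ⟨M', h1, h2⟩ := ih.mp hrest
        exact ⟨M', PetriNet.fires.cons he h1, h2⟩
    · rintro ⟨M', h1, h2⟩
      cases h1 with
      | cons he hrest => exact PetriNet.fires.cons he (ih.mpr ⟨M', hrest, h2⟩)

lemma fire_int {N : PetriNet m n} {M : Fin m → ℕ} {t : Fin n} (h : N.enabled M t) (p : Fin m) :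
    ((N.fire M t) p : ℤ) = (M p : ℤ) + N.C p t := by
  have h1 : N.Pre p t ≤ M p + N.Post p t := (h p).trans (Nat.le_add_right _ _)
  simp only [PetriNet.fire, PetriNet.C]
  push_cast [Nat.cast_sub h1]
  ring

lemma sum_C_split (N : PetriNet m n) (p : Fin m) (t : Fin n) (a b : Fin n → ℕ)
    (hab : ∀ s, (a s : ℤ) = (b s : ℤ) + if s = t then 1 else 0) :
    (∑ s, N.C p s * (a s : ℤ)) = (∑ s, N.C p s * (b s : ℤ)) + N.C p t := by
  calc (∑ s, N.C p s * (a s : ℤ))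
      = ∑ s, (N.C p s * (b s : ℤ) + if s = t then N.C p s else 0) := by
        apply Finset.sum_congr rfl; intro s _; rw [hab s]; split <;> ring
    _ = (∑ s, N.C p s * (b s : ℤ)) + N.C p t := by
        rw [Finset.sum_add_distrib, Finset.sum_ite_eq' Finset.univ t (fun s => N.C p s)]
        simp

lemma fvec_cons_sum (N : PetriNet m n) (p : Fin m) (t : Fin n) (σ : List (Fin n)) :
    (∑ s, N.C p s * (fvec (t :: σ) s : ℤ)) = (∑ s, N.C p s * (fvec σ s : ℤ)) + N.C p t := by
  apply sum_C_split
  intro s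
  rcases eq_or_ne s t with rfl | hne
  · rw [if_pos rfl]
    simp [PetriNet.fvec, List.count_cons_self]
  · rw [if_neg hne]
    simp [PetriNet.fvec, List.count_cons_of_ne hne.symm]

lemma fires_stateEq {N : PetriNet m n} {M M' : Fin m → ℕ} {σ : List (Fin n)}
    (h : N.fires M σ M') :
    ∀ p, (M' p : ℤ) = (M p : ℤ) + ∑ s, N.C p s * (fvec σ s : ℤ) := by
  induction h with
  | nil M => intro p; simp [PetriNet.fvec]
  | @cons M M' t σ he hrest ih =>
    intro p
    have h1 := ih p
    rw [fire_int he p] at h1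
    rw [fvec_cons_sum, h1]
    ring

lemma acyclic_fires_aux (N : PetriNet m n) (TI : Set (Fin n)) (hacyc : N.SubnetAcyclic TI) :
    ∀ k (y : Fin n → ℕ), (∑ t, y t) = k → (∀ t, y t ≠ 0 → t ∈ TI) →
    ∀ (M M' : Fin m → ℕ), (∀ p, (M' p : ℤ) = (M p : ℤ) + ∑ t, N.C p t * (y t : ℤ)) →
    ∃ σ, ImplicitSeq TI σ ∧ fvec σ = y ∧ N.fires M σ M' := by
  intro k
  induction k using Nat.strong_induction_on with
  | _ k ih =>
  intro y hk hyTI M M' hse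
  rcases Nat.eq_zero_or_pos k with h0 | hpos
  · subst h0
    have hy0 : ∀ t, y t = 0 := by
      intro t
      have := (Finset.sum_eq_zero_iff).mp hk
      exact this t (Finset.mem_univ t)
    have hMM : M' = M := by
      funext p
      have := hse p
      simp [hy0] at this
      exact_mod_cast this
    refine ⟨[], ?_, ?_, ?_⟩
    · intro t ht; simp at ht
    · funext s; simp [PetriNet.fvec, hy0]
    · rw [hMM]; exact PetriNet.fires.nil M
  · -- pick a topologically minimal transition in the support of y
    set r : Fin n → Fin n → Prop :=
      fun s t => Relation.TransGen (N.arc TI) (Sum.inr s) (Sum.inr t) with hrdef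
    haveI : IsTrans (Fin n) r := ⟨fun _ _ _ h1 h2 => h1.trans h2⟩
    haveI : IsIrrefl (Fin n) r := ⟨fun t h => hacyc _ h⟩
    have hwf : WellFounded r := Finite.wellFounded_of_trans_of_irrefl r
    have hS : {t | y t ≠ 0}.Nonempty := by
      by_contra hS
      push_neg at hS
      simp only [Set.eq_empty_iff_forall_notMem, Set.mem_setOf_eq, not_not] at hS
      have : (∑ t, y t) = 0 := Finset.sum_eq_zero (fun t _ => hS t)
      omega
    obtain ⟨t₀, ht₀S, hmin⟩ := hwf.has_min _ hS
    have ht₀S' : y t₀ ≠ 0 := ht₀S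
    have ht₀TI : t₀ ∈ TI := hyTI t₀ ht₀S'
    have hnopost : ∀ p, 0 < N.Pre p t₀ → ∀ s, y s ≠ 0 → N.Post p s = 0 := by
      intro p hp s hs
      by_contra hpost
      have hpost' : 0 < N.Post p s := Nat.pos_of_ne_zero hpost
      have harc1 : N.arc TI (Sum.inr s) (Sum.inl p) := ⟨hyTI s hs, hpost'⟩
      have harc2 : N.arc TI (Sum.inl p) (Sum.inr t₀) := ⟨ht₀TI, hp⟩
      exact hmin s hs ((Relation.TransGen.single harc1).tail harc2)
    have henabled : N.enabled M t₀ := by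
      intro p
      rcases Nat.eq_zero_or_pos (N.Pre p t₀) with h | h
      · omega
      · have hsum : (∑ s, N.C p s * (y s : ℤ)) = - ∑ s, (N.Pre p s : ℤ) * (y s : ℤ) := by
          rw [← Finset.sum_neg_distrib]
          apply Finset.sum_congr rfl
          intro s _
          rcases eq_or_ne (y s) 0 with h0 | h0
          · simp [h0]
          · simp only [PetriNet.C, hnopost p h s h0]
            push_cast
            ring
        have hge : (N.Pre p t₀ : ℤ) * (y t₀ : ℤ) ≤ ∑ s, (N.Pre p s : ℤ) * (y s : ℤ) :=
          Finset.single_le_sum (f := fun s => (N.Pre p s : ℤ) * (y s : ℤ))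
            (fun i _ => by positivity) (Finset.mem_univ t₀)
        have h1 : (N.Pre p t₀ : ℤ) ≤ (N.Pre p t₀ : ℤ) * (y t₀ : ℤ) :=
          le_mul_of_one_le_right (by positivity)
            (by exact_mod_cast Nat.one_le_iff_ne_zero.mpr ht₀S')
        have h2 := hse p
        rw [hsum] at h2
        have h3 : (0 : ℤ) ≤ (M' p : ℤ) := by positivity
        have : (N.Pre p t₀ : ℤ) ≤ (M p : ℤ) := by linarith
        exact_mod_cast this
    set y' : Fin n → ℕ := Function.update y t₀ (y t₀ - 1) with hy'
    have hy'le : ∀ s, y' s ≤ y s := by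
      intro s
      rcases eq_or_ne s t₀ with rfl | hne
      · simp [hy', Function.update_self]
      · simp [hy', Function.update_of_ne hne]
    have hy't₀ : y' t₀ = y t₀ - 1 := by simp [hy', Function.update_self]
    have hy'ne : ∀ s, s ≠ t₀ → y' s = y s := fun s hs => by
      simp [hy', Function.update_of_ne hs]
    have hys : ∀ s, (y s : ℤ) = (y' s : ℤ) + if s = t₀ then 1 else 0 := by
      intro s
      rcases eq_or_ne s t₀ with rfl | hne
      · rw [hy't₀, if_pos rfl]
        have : 1 ≤ y s := Nat.one_le_iff_ne_zero.mpr ht₀S'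
        push_cast [Nat.cast_sub this]
        ring
      · rw [hy'ne s hne, if_neg hne]; ring
    have hsum' : (∑ t, y' t) < k := by
      rw [← hk]
      apply Finset.sum_lt_sum (fun i _ => hy'le i)
      exact ⟨t₀, Finset.mem_univ t₀, by rw [hy't₀]; omega⟩
    have hyTI' : ∀ t, y' t ≠ 0 → t ∈ TI := by
      intro t ht
      rcases eq_or_ne t t₀ with rfl | hne
      · exact ht₀TI
      · exact hyTI t (by rw [← hy'ne t hne]; exact ht)
    have hse' : ∀ p, (M' p : ℤ) = ((N.fire M t₀) p : ℤ) + ∑ t, N.C p t * (y' t : ℤ) := by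
      intro p
      rw [fire_int henabled p, hse p, sum_C_split N p t₀ y y' hys]
      ring
    obtain ⟨σ', himpl', hvec', hf'⟩ := ih _ hsum' y' rfl hyTI' (N.fire M t₀) M' hse'
    refine ⟨t₀ :: σ', ?_, ?_, PetriNet.fires.cons henabled hf'⟩
    · intro s hs
      rcases List.mem_cons.mp hs with rfl | hs
      · exact ht₀TI
      · exact himpl' s hs
    · funext s
      rcases eq_or_ne s t₀ with rfl | hne
      · have hc : fvec (s :: σ') s = fvec σ' s + 1 := by
          simp [PetriNet.fvec, List.count_cons_self]
        rw [hc, hvec', hy't₀]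
        omega
      · have hc : fvec (t₀ :: σ') s = fvec σ' s := by
          simp [PetriNet.fvec, List.count_cons_of_ne hne.symm]
        rw [hc, hvec', hy'ne s hne]

lemma acyclic_fires (N : PetriNet m n) (TI : Set (Fin n)) (hacyc : N.SubnetAcyclic TI)
    (y : Fin n → ℕ) (hyTI : ∀ t, y t ≠ 0 → t ∈ TI) (M M' : Fin m → ℕ)
    (hse : ∀ p, (M' p : ℤ) = (M p : ℤ) + ∑ t, N.C p t * (y t : ℤ)) :
    ∃ σ, ImplicitSeq TI σ ∧ fvec σ = y ∧ N.fires M σ M' :=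
  acyclic_fires_aux N TI hacyc _ y rfl hyTI M M' hse

lemma exists_minExpl (N : PetriNet m n) (TI : Set (Fin n)) (M : Fin m → ℕ) (t : Fin n) :
    ∀ k (σ₀ : List (Fin n)), (∑ s, fvec σ₀ s) = k → N.IsExplanation TI M t σ₀ →
    ∃ σmin, N.IsExplanation TI M t σmin ∧ fvec σmin ≤ fvec σ₀ ∧
      N.MinExplVec TI M t (fvec σmin) := by
  intro k
  induction k using Nat.strong_induction_on with
  | _ k ih =>
  intro σ₀ hk h
  by_cases hmin : ∀ σ', N.IsExplanation TI M t σ' → ¬ fvec σ' < fvec σ₀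
  · exact ⟨σ₀, h, le_refl _, ⟨σ₀, h, rfl⟩, hmin⟩
  · push_neg at hmin
    obtain ⟨σ', h', hlt⟩ := hmin
    have hle : fvec σ' ≤ fvec σ₀ := le_of_lt hlt
    have hsum : (∑ s, fvec σ' s) < k := by
      rw [← hk]
      obtain ⟨hle', i, hi⟩ := Pi.lt_def.mp hlt
      exact Finset.sum_lt_sum (fun j _ => hle' j) ⟨i, Finset.mem_univ i, hi⟩
    obtain ⟨σmin, hexp, hle', hminv⟩ := ih _ hsum σ' rfl h'
    exact ⟨σmin, hexp, hle'.trans hle, hminv⟩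

lemma split_first_explicit (TI : Set (Fin n)) (σ : List (Fin n)) :
    ImplicitSeq TI σ ∨ ∃ α t β, σ = α ++ t :: β ∧ ImplicitSeq TI α ∧ t ∉ TI := by
  induction σ with
  | nil => left; intro t ht; simp at ht
  | cons a σ ih =>
    by_cases ha : a ∈ TI
    · rcases ih with h | ⟨α, t, β, rfl, hα, ht⟩
      · left
        intro s hs
        rcases List.mem_cons.mp hs with rfl | hs
        · exact ha
        · exact h s hs
      · right
        refine ⟨a :: α, t, β, rfl, ?_, ht⟩
        intro s hs
        rcases List.mem_cons.mp hs with rfl | hs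
        · exact ha
        · exact hα s hs
    · right; exact ⟨[], a, σ, rfl, by intro s hs; simp at hs, ha⟩

end Aux

/-- any firing sequence `σ` from `M_b` reaching `M` can be
rearranged into a BRG path firing minimal explanations before the same
explicit transitions (in order), followed by a tail of implicit transitions;
hence `M` lies in the implicit reach of a basis marking reachable in the BRG
from `M_b`. -/
theorem rearrange_to_brg_path {m n : ℕ} (N : PetriNet m n) (TI : Set (Fin n))
    [DecidablePred (· ∈ TI)]
    (hacyc : N.SubnetAcyclic TI)
    (Mb M : Fin m → ℕ) (σ : List (Fin n)) (hσ : N.fires Mb σ M) :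
    ∃ Mb' : Fin m → ℕ,
      BRGpath N TI Mb (σ.filter (fun t => decide (t ∉ TI))) Mb' ∧
      M ∈ N.RI TI Mb' := by
  suffices h : ∀ k (Mb : Fin m → ℕ) (σ : List (Fin n)),
      (σ.filter (fun t => decide (t ∉ TI))).length = k → N.fires Mb σ M →
      ∃ Mb', BRGpath N TI Mb (σ.filter (fun t => decide (t ∉ TI))) Mb' ∧ M ∈ N.RI TI Mb' by
    exact h _ Mb σ rfl hσ
  clear hσ σ Mb
  intro k
  induction k using Nat.strong_induction_on with
  | _ k ih =>
  intro Mb σ hk hσ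
  rcases split_first_explicit TI σ with himpl | ⟨α, t, β, rfl, hα, htE⟩
  · have hfil : σ.filter (fun t => decide (t ∉ TI)) = [] := by
      simp only [List.filter_eq_nil_iff, decide_eq_true_eq, not_not]
      exact himpl
    rw [hfil]
    exact ⟨Mb, BRGpath.nil Mb, σ, himpl, hσ⟩
  · have hfilα : α.filter (fun s => decide (s ∉ TI)) = [] := by
      simp only [List.filter_eq_nil_iff, decide_eq_true_eq, not_not]
      exact hα
    have hfil : (α ++ t :: β).filter (fun s => decide (s ∉ TI)) =
        t :: β.filter (fun s => decide (s ∉ TI)) := by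
      rw [List.filter_append, hfilα, List.nil_append, List.filter_cons,
        if_pos (by simpa using htE)]
    obtain ⟨M₁, hfα, hftβ⟩ := fires_append.mp hσ
    cases hftβ with
    | cons hen hfβ =>
    have hexpα : N.IsExplanation TI Mb t α := ⟨hα, M₁, hfα, hen⟩
    obtain ⟨σmin, hexpmin, hle, hminv⟩ := exists_minExpl N TI Mb t _ α rfl hexpα
    obtain ⟨himplmin, M₂', hfmin, henmin⟩ := hexpmin
    set M₂ := N.fire M₂' t with hM₂
    set r : Fin n → ℕ := fun s => fvec α s - fvec σmin s with hr
    have hadd : ∀ s, fvec α s = fvec σmin s + r s := by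
      intro s
      have h1 : fvec σmin s ≤ fvec α s := hle s
      show fvec α s = fvec σmin s + (fvec α s - fvec σmin s)
      omega
    have hrTI : ∀ s, r s ≠ 0 → s ∈ TI := by
      intro s hs
      have hαs : fvec α s ≠ 0 := by
        have := hadd s; omega
      have hmem : s ∈ α := by
        by_contra hmem
        exact hαs (List.count_eq_zero.mpr hmem)
      exact hα s hmem
    have hse : ∀ p, ((N.fire M₁ t) p : ℤ) = (M₂ p : ℤ) + ∑ s, N.C p s * (r s : ℤ) := by
      intro p
      have e1 := fires_stateEq hfα p
      have e2 := fires_stateEq hfmin p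
      have e3 := fire_int hen p
      have e4 := fire_int henmin p
      have hsplit : (∑ s, N.C p s * (fvec α s : ℤ))
          = (∑ s, N.C p s * (fvec σmin s : ℤ)) + ∑ s, N.C p s * (r s : ℤ) := by
        rw [← Finset.sum_add_distrib]
        apply Finset.sum_congr rfl
        intro s _
        rw [hadd s]
        push_cast
        ring
      rw [e3, e1, hsplit, hM₂, e4, e2]
      ring
    obtain ⟨γ, hγTI, hγvec, hγfires⟩ := acyclic_fires N TI hacyc r hrTI M₂ (N.fire M₁ t) hse
    have hfires2 : N.fires M₂ (γ ++ β) M := fires_append.mpr ⟨_, hγfires, hfβ⟩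
    have hfilγ : γ.filter (fun s => decide (s ∉ TI)) = [] := by
      simp only [List.filter_eq_nil_iff, decide_eq_true_eq, not_not]
      exact hγTI
    have hfilγβ : (γ ++ β).filter (fun s => decide (s ∉ TI)) =
        β.filter (fun s => decide (s ∉ TI)) := by
      rw [List.filter_append, hfilγ, List.nil_append]
    have hlen : ((γ ++ β).filter (fun s => decide (s ∉ TI))).length < k := by
      rw [hfilγβ, ← hk, hfil]
      simp
    obtain ⟨Mb', hpath, hRI⟩ := ih _ hlen M₂ (γ ++ β) rfl hfires2
    rw [hfilγβ] at hpath
    refine ⟨Mb', ?_, hRI⟩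
    rw [hfil]
    refine BRGpath.cons htE ⟨fvec σmin, hminv, ?_⟩ hpath
    intro p
    rw [hM₂, fire_int henmin p, fires_stateEq hfmin p]
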